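/- The 5-dimensional KdV map φ(v₀,...,v₄) = (v₁,...,v₄, -v₀/(v₀v₂ - v₀v₃ - 1)) is a Poisson map for the structure matrix Ω with nonzero upper-triangular entries Ω₁₃ = -v₀²v₂², Ω₁₄ = v₀²v₃², Ω₁₅ = v₀²v₂²v₄², Ω₂₄ = -v₁²v₃², Ω₂₅ = v₁²v₄², Ω₃₅ = -v₂²v₄²; that is, dφ · Ω(v) · dφᵀ = Ω(φ(v)). -/

import Mathlib

open Matrix

noncomputable def kdvOmega (v : Fin 5 → ℝ) : Matrix (Fin 5) (Fin 5) ℝ :=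
  !![0, 0, -(v 0)^2*(v 2)^2, (v 0)^2*(v 3)^2, (v 0)^2*(v 2)^2*(v 4)^2;
     0, 0, 0, -(v 1)^2*(v 3)^2, (v 1)^2*(v 4)^2;
     (v 0)^2*(v 2)^2, 0, 0, 0, -(v 2)^2*(v 4)^2;
     -(v 0)^2*(v 3)^2, (v 1)^2*(v 3)^2, 0, 0, 0;
     -(v 0)^2*(v 2)^2*(v 4)^2, -(v 1)^2*(v 4)^2, (v 2)^2*(v 4)^2, 0, 0]

noncomputable def kdvMap (v : Fin 5 → ℝ) : Fin 5 → ℝ :=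
  ![v 1, v 2, v 3, v 4, -(v 0) / (v 0 * v 2 - v 0 * v 3 - 1)]

noncomputable def kdvJac (v : Fin 5 → ℝ) : Matrix (Fin 5) (Fin 5) ℝ :=
  fun i j => deriv (fun t => kdvMap (Function.update v j t) i) (v j)

theorem kdvJac_eq (v : Fin 5 → ℝ) (h : v 0 * v 2 - v 0 * v 3 - 1 ≠ 0) :
    kdvJac v = !![0,1,0,0,0; 0,0,1,0,0; 0,0,0,1,0; 0,0,0,0,1;
      1/(v 0 * v 2 - v 0 * v 3 - 1)^2, 0,
      (v 0)^2/(v 0 * v 2 - v 0 * v 3 - 1)^2,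
      -((v 0)^2/(v 0 * v 2 - v 0 * v 3 - 1)^2), 0] := by
  ext i j
  fin_cases i <;> fin_cases j <;>
    simp (config := { decide := true })
      [kdvJac, kdvMap, Function.update, Fin.ext_iff, vecHead, vecTail]
  · -- ∂/∂v0
    have hD : HasDerivAt (fun t : ℝ => t * v 2 - t * v 3 - 1) (v 2 - v 3) (v 0) := by
      simpa using (((hasDerivAt_id (v 0)).mul_const (v 2)).sub
        ((hasDerivAt_id (v 0)).mul_const (v 3))).sub_const 1
    have := ((hasDerivAt_id (v 0)).neg.div hD h).deriv
    simp only [Pi.div_def, Pi.neg_def, id] at this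
    rw [this]
    field_simp
    ring
  · -- ∂/∂v2
    have hD : HasDerivAt (fun t : ℝ => v 0 * t - v 0 * v 3 - 1) (v 0) (v 2) := by
      simpa [sub_sub] using
        ((hasDerivAt_id (v 2)).const_mul (v 0)).sub_const (v 0 * v 3 + 1)
    have := ((hasDerivAt_const (v 2) (-(v 0))).div hD h).deriv
    erw [this]
    field_simp
    ring
  · -- ∂/∂v3
    have hD : HasDerivAt (fun t : ℝ => v 0 * v 2 - v 0 * t - 1) (-(v 0)) (v 3) := by
      simpa using ((hasDerivAt_const (v 3) (v 0 * v 2)).sub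
        ((hasDerivAt_id (v 3)).const_mul (v 0))).sub_const 1
    have := ((hasDerivAt_const (v 3) (-(v 0))).div hD h).deriv
    erw [this]
    field_simp
    ring


section stage
variable (a c d p q r s t : ℝ)

set_option maxHeartbeats 800000 in
theorem stage1 :
    (!![0,1,0,0,0; 0,0,1,0,0; 0,0,0,1,0; 0,0,0,0,1; a, 0, c, -c, 0] :
      Matrix (Fin 5) (Fin 5) ℝ) *
    !![0, 0, -p^2*r^2, p^2*s^2, p^2*r^2*t^2;
       0, 0, 0, -q^2*s^2, q^2*t^2;
       p^2*r^2, 0, 0, 0, -r^2*t^2;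
       -p^2*s^2, q^2*s^2, 0, 0, 0;
       -p^2*r^2*t^2, -q^2*t^2, r^2*t^2, 0, 0] =
    !![0, 0, 0, -q^2*s^2, q^2*t^2;
       p^2*r^2, 0, 0, 0, -r^2*t^2;
       -p^2*s^2, q^2*s^2, 0, 0, 0;
       -p^2*r^2*t^2, -q^2*t^2, r^2*t^2, 0, 0;
       c*p^2*(r^2+s^2), -c*q^2*s^2, -a*p^2*r^2, a*p^2*s^2, a*p^2*r^2*t^2 - c*r^2*t^2] := by
  ext i j
  fin_cases i <;> fin_cases j <;>
    simp [mul_apply, Fin.sum_univ_five, vecHead, vecTail] <;> ring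

set_option maxHeartbeats 800000 in
theorem stage2 :
    (!![0, 0, 0, -q^2*s^2, q^2*t^2;
       p^2*r^2, 0, 0, 0, -r^2*t^2;
       -p^2*s^2, q^2*s^2, 0, 0, 0;
       -p^2*r^2*t^2, -q^2*t^2, r^2*t^2, 0, 0;
       (p^2/d^2)*p^2*(r^2+s^2), -(p^2/d^2)*q^2*s^2, -(1/d^2)*p^2*r^2, (1/d^2)*p^2*s^2,
         (1/d^2)*p^2*r^2*t^2 - (p^2/d^2)*r^2*t^2] :
      Matrix (Fin 5) (Fin 5) ℝ) *
    (!![0,1,0,0,0; 0,0,1,0,0; 0,0,0,1,0; 0,0,0,0,1;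
        1/d^2, 0, p^2/d^2, -(p^2/d^2), 0])ᵀ =
    !![0, 0, -q^2*s^2, q^2*t^2, q^2*s^2*(p^2/d^2);
       0, 0, 0, -r^2*t^2, r^2*(p^2/d^2);
       q^2*s^2, 0, 0, 0, -s^2*(p^2/d^2);
       -q^2*t^2, r^2*t^2, 0, 0, 0;
       -q^2*s^2*(p^2/d^2), -r^2*(p^2/d^2), s^2*(p^2/d^2), 0, 0] := by
  ext i j
  fin_cases i <;> fin_cases j <;>
    simp [mul_apply, Fin.sum_univ_five, vecHead, vecTail] <;> first | ring1 | tauto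

end stage

theorem omega_phi (v : Fin 5 → ℝ) :
    kdvOmega (kdvMap v) =
    !![0, 0, -(v 1)^2*(v 3)^2, (v 1)^2*(v 4)^2,
         (v 1)^2*(v 3)^2*((v 0)^2/(v 0 * v 2 - v 0 * v 3 - 1)^2);
       0, 0, 0, -(v 2)^2*(v 4)^2, (v 2)^2*((v 0)^2/(v 0 * v 2 - v 0 * v 3 - 1)^2);
       (v 1)^2*(v 3)^2, 0, 0, 0, -(v 3)^2*((v 0)^2/(v 0 * v 2 - v 0 * v 3 - 1)^2);
       -(v 1)^2*(v 4)^2, (v 2)^2*(v 4)^2, 0, 0, 0;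
       -(v 1)^2*(v 3)^2*((v 0)^2/(v 0 * v 2 - v 0 * v 3 - 1)^2),
         -(v 2)^2*((v 0)^2/(v 0 * v 2 - v 0 * v 3 - 1)^2),
         (v 3)^2*((v 0)^2/(v 0 * v 2 - v 0 * v 3 - 1)^2), 0, 0] := by
  ext i j
  fin_cases i <;> fin_cases j <;>
    simp [kdvOmega, kdvMap, vecHead, vecTail, div_pow, neg_sq] <;> first | ring1 | (left; ring1)

set_option maxHeartbeats 800000 in
theorem kdvMap_poisson (v : Fin 5 → ℝ) (h : v 0 * v 2 - v 0 * v 3 - 1 ≠ 0) :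
    kdvJac v * kdvOmega v * (kdvJac v)ᵀ = kdvOmega (kdvMap v) := by
  rw [kdvJac_eq v h, omega_phi]
  rw [kdvOmega]
  have s1 := stage1 (1/(v 0 * v 2 - v 0 * v 3 - 1)^2)
    ((v 0)^2/(v 0 * v 2 - v 0 * v 3 - 1)^2) (v 0) (v 1) (v 2) (v 3) (v 4)
  have s2 := stage2 (v 0 * v 2 - v 0 * v 3 - 1) (v 0) (v 1) (v 2) (v 3) (v 4)
  rw [s1, s2]
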